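/- Let p be a polynomial with real coefficients of degree 8, with coefficients c_i, such that c_0 > 0, p is palindromic (c_i = c_{8-i} for all 0 ≤ i ≤ 8), and the coefficients of p alternate in sign ((-1)^i · c_i ≥ 0 for every i ≥ 0). Suppose at least two of the complex roots of p, counted with multiplicity, lie on the unit circle, and that -c_7/c_8 ≥ 2. If p has a complex root z with Re z ≤ -1, then p has a real root x with x > 1 and x + 1/x > -c_7/c_8. -/

import Mathlib

open Polynomial Multiset

private lemma count_conj_invariant {M : Multiset ℂ} (h : M.map (starRingEnd ℂ) = M) (a : ℂ) :
    M.count ((starRingEnd ℂ) a) = M.count a := by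
  conv_lhs => rw [← h]
  exact Multiset.count_map_eq_count' _ _ (starRingEnd ℂ).injective a

private lemma pair_le_of_mem {a b : ℂ} {M : Multiset ℂ} (hab : a ≠ b) (ha : a ∈ M)
    (hb : b ∈ M) : ({a, b} : Multiset ℂ) ≤ M := by
  have hb' : b ∈ M.erase a := (Multiset.mem_erase_of_ne (Ne.symm hab)).mpr hb
  calc ({a, b} : Multiset ℂ) = a ::ₘ {b} := rfl
    _ ≤ a ::ₘ M.erase a := Multiset.cons_le_cons a ((Multiset.singleton_le).mpr hb')
    _ = M := Multiset.cons_erase ha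

private lemma cons_le_of_mem {a : ℂ} {M N : Multiset ℂ} (ha : a ∈ N) (h : M ≤ N.erase a) :
    a ::ₘ M ≤ N :=
  le_of_le_of_eq (Multiset.cons_le_cons a h) (Multiset.cons_erase ha)

set_option maxHeartbeats 1000000 in
/-- A real polynomial of degree `8` with positive constant term, palindromic
coefficients (`cᵢ = c_{8-i}`) and coefficients alternating in sign, having at
least two complex roots (counted with multiplicity) on the unit circle and
satisfying `-c₇/c₈ ≥ 2`: if it has a complex root `z` with `Re z ≤ -1`, then it
has a real root `x > 1` with `x + 1/x > -c₇/c₈`. -/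
theorem stmt_6 (p : Polynomial ℝ)
    (hdeg : p.natDegree = 8)
    (h0 : 0 < p.coeff 0)
    (hpal : ∀ i ≤ 8, p.coeff i = p.coeff (8 - i))
    (halt : ∀ i : ℕ, 0 ≤ (-1 : ℝ) ^ i * p.coeff i)
    (hcirc : 2 ≤
      ((p.map (algebraMap ℝ ℂ)).roots.filter fun z => ‖z‖ = 1).card)
    (hq : 2 ≤ -(p.coeff 7) / p.coeff 8)
    (z : ℂ) (hz : Polynomial.aeval z p = 0) (hre : z.re ≤ -1) :
    ∃ x : ℝ, p.eval x = 0 ∧ 1 < x ∧ -(p.coeff 7) / p.coeff 8 < x + 1 / x := by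
  have hc08 : p.coeff 0 = p.coeff 8 := by simpa using hpal 0 (by norm_num)
  have hc8 : 0 < p.coeff 8 := hc08 ▸ h0
  have hp0 : p ≠ 0 := fun h => by simp [h] at hc8
  set s : ℝ := -(p.coeff 7) / p.coeff 8 with hsdef
  set P := p.map (algebraMap ℝ ℂ) with hPdef
  have hP0 : P ≠ 0 := by
    simpa [hPdef, Polynomial.map_eq_zero_iff (algebraMap ℝ ℂ).injective] using hp0
  have hPdeg : P.natDegree = 8 := by
    rw [hPdef, Polynomial.natDegree_map (algebraMap ℝ ℂ)]; exact hdeg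
  have hPcoeff : ∀ i, P.coeff i = ((p.coeff i : ℝ) : ℂ) := fun i => by
    rw [hPdef, Polynomial.coeff_map]; rfl
  have hsplits : P.Splits := IsAlgClosed.splits P
  have hcard : P.roots.card = 8 := by
    rw [Polynomial.splits_iff_card_roots.mp hsplits, hPdeg]
  -- evaluation at real points
  have hevalR : ∀ x : ℝ, P.eval (x : ℂ) = ((p.eval x : ℝ) : ℂ) := by
    intro x
    rw [hPdef, Polynomial.eval_map]
    exact Polynomial.eval₂_at_apply (algebraMap ℝ ℂ) x
  -- positivity on nonpositive reals
  have hpos : ∀ x : ℝ, x ≤ 0 → 0 < p.eval x := by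
    intro x hx
    rw [Polynomial.eval_eq_sum_range' (show p.natDegree < 9 by rw [hdeg]; norm_num)]
    apply Finset.sum_pos'
    · intro i _
      rcases Nat.even_or_odd i with he | ho
      · have hc : 0 ≤ p.coeff i := by simpa [he.neg_one_pow] using halt i
        exact mul_nonneg hc (he.pow_nonneg x)
      · have hc : p.coeff i ≤ 0 := by
          have := halt i
          rw [ho.neg_one_pow] at this; linarith
        have hx' : x ^ i ≤ 0 := ho.pow_nonpos hx
        nlinarith
    · exact ⟨0, by simp, by simpa using h0⟩
  have hzroot : P.eval z = 0 := by
    rw [hPdef, Polynomial.eval_map, ← Polynomial.aeval_def]; exact hz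
  -- z is not real
  have him : z.im ≠ 0 := by
    intro h
    have hzr : z = ((z.re : ℝ) : ℂ) := Complex.ext rfl (by simp [h])
    rw [hzr, hevalR] at hzroot
    have : p.eval z.re = 0 := by exact_mod_cast hzroot
    exact absurd this (hpos z.re (by linarith)).ne'
  have hz0 : z ≠ 0 := fun h => by simp [h] at him
  -- |z|² > 1
  have hnormSq : 1 < Complex.normSq z := by
    have h2 : 0 < z.im * z.im := mul_self_pos.mpr him
    rw [Complex.normSq_apply]; nlinarith
  -- conjugation-invariance of the root multiset
  have hPconj : P.map (starRingEnd ℂ) = P := by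
    rw [hPdef, Polynomial.map_map]
    congr 1
    ext x
    simp [Complex.conj_ofReal]
  have hrootsconj : P.roots.map (starRingEnd ℂ) = P.roots := by
    conv_rhs => rw [← hPconj]
    rw [hsplits.roots_map (starRingEnd ℂ)]
  have hcount : ∀ a : ℂ, P.roots.count ((starRingEnd ℂ) a) = P.roots.count a :=
    count_conj_invariant hrootsconj
  -- reciprocal roots from palindromicity
  have hroot_inv : ∀ w : ℂ, w ≠ 0 → P.eval w = 0 → P.eval w⁻¹ = 0 := by
    intro w hw hw0
    have key : w ^ 8 * P.eval w⁻¹ = P.eval w := by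
      rw [Polynomial.eval_eq_sum_range' (show P.natDegree < 9 by rw [hPdeg]; norm_num),
        Polynomial.eval_eq_sum_range' (show P.natDegree < 9 by rw [hPdeg]; norm_num),
        Finset.mul_sum]
      rw [← Finset.sum_range_reflect (fun i => P.coeff i * w ^ i) 9]
      refine Finset.sum_congr rfl fun i hi => ?_
      have hi8 : i ≤ 8 := by
        have := Finset.mem_range.mp hi; omega
      have hco : P.coeff (9 - 1 - i) = P.coeff i := by
        have : (9 : ℕ) - 1 - i = 8 - i := by omega
        rw [this, hPcoeff, hPcoeff, ← hpal i hi8]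
      rw [hco]
      have hpow : w ^ 8 * (w ^ i)⁻¹ = w ^ (9 - 1 - i) := by
        rw [mul_inv_eq_iff_eq_mul₀ (pow_ne_zero i hw), ← pow_add]
        congr 1; omega
      rw [inv_pow, ← hpow]; ring
    rw [hw0] at key
    rcases mul_eq_zero.mp key with h | h
    · exact absurd h (pow_ne_zero 8 hw)
    · exact h
  -- sum and product of the roots
  have hlc : P.leadingCoeff = ((p.coeff 8 : ℝ) : ℂ) := by
    have h1 : P.leadingCoeff = P.coeff 8 := by rw [← hPdeg]; rfl
    rw [h1, hPcoeff]
  have hc8C : ((p.coeff 8 : ℝ) : ℂ) ≠ 0 := by exact_mod_cast hc8.ne'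
  have hmonic : (Polynomial.C ((p.coeff 8 : ℝ) : ℂ)⁻¹ * P).Monic :=
    Polynomial.monic_C_mul_of_mul_leadingCoeff_eq_one
      (by rw [hlc]; exact inv_mul_cancel₀ hc8C)
  set Q := Polynomial.C ((p.coeff 8 : ℝ) : ℂ)⁻¹ * P with hQdef
  have hQroots : Q.roots = P.roots := Polynomial.roots_C_mul P (inv_ne_zero hc8C)
  have hQsplits : Q.Splits := IsAlgClosed.splits Q
  have hQdeg : Q.natDegree = 8 := by
    rw [hQdef, Polynomial.natDegree_C_mul (inv_ne_zero hc8C), hPdeg]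
  have hsum : P.roots.sum = ((s : ℝ) : ℂ) := by
    have h1 := hQsplits.nextCoeff_eq_neg_sum_roots_of_monic hmonic
    rw [Polynomial.nextCoeff_of_natDegree_pos (by rw [hQdeg]; norm_num), hQdeg] at h1
    have h2 : Q.coeff 7 = ((p.coeff 8 : ℝ) : ℂ)⁻¹ * ((p.coeff 7 : ℝ) : ℂ) := by
      rw [hQdef, Polynomial.coeff_C_mul, hPcoeff]
    rw [hQroots, h2] at h1
    rw [hsdef]
    push_cast
    rw [div_eq_mul_inv, neg_mul, mul_comm]
    rw [eq_comm, neg_eq_iff_eq_neg, ← h1]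
  have hprod : P.roots.prod = 1 := by
    have h3 := hQsplits.coeff_zero_eq_prod_roots_of_monic hmonic
    rw [hQdeg, hQroots] at h3
    have h4 : Q.coeff 0 = ((p.coeff 8 : ℝ) : ℂ)⁻¹ * ((p.coeff 8 : ℝ) : ℂ) := by
      rw [hQdef, Polynomial.coeff_C_mul, hPcoeff, hc08]
    rw [h4, inv_mul_cancel₀ hc8C] at h3
    norm_num at h3
    exact h3.symm
  -- the circle roots
  have hnegone : ((-1 : ℂ)) ∉ P.roots := by
    intro hmem
    have h1 : P.eval (-1) = 0 := Polynomial.isRoot_of_mem_roots hmem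
    have h2 : ((-1 : ℝ) : ℂ) = (-1 : ℂ) := by norm_num
    rw [← h2, hevalR] at h1
    have h3 : p.eval (-1) = 0 := by exact_mod_cast h1
    exact absurd h3 (hpos (-1) (by norm_num)).ne'
  have hCle : (P.roots.filter fun w => ‖w‖ = 1) ≤ P.roots := Multiset.filter_le _ _
  obtain ⟨W, t1, hWle, hWcard, hWabs, hWconj, hWsum, hWprod, ht1l, ht1u⟩ :
      ∃ (W : Multiset ℂ) (t1 : ℝ), W ≤ P.roots ∧ Multiset.card W = 2
        ∧ (∀ w ∈ W, ‖w‖ = 1)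
        ∧ W.map (starRingEnd ℂ) = W ∧ W.sum = ((t1 : ℝ) : ℂ) ∧ W.prod = 1
        ∧ -2 ≤ t1 ∧ t1 ≤ 2 := by
    by_cases hcase : ∃ w ∈ (P.roots.filter fun w => ‖w‖ = 1), w.im ≠ 0
    · obtain ⟨w, hwC, hwim⟩ := hcase
      have hwabs : ‖w‖ = 1 := (Multiset.mem_filter.mp hwC).2
      have hwroot : w ∈ P.roots := (Multiset.mem_filter.mp hwC).1
      have hwconj : (starRingEnd ℂ) w ∈ P.roots := by
        rw [← Multiset.count_pos, hcount w, Multiset.count_pos]; exact hwroot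
      have hne : w ≠ (starRingEnd ℂ) w := fun h => hwim (Complex.conj_eq_iff_im.mp h.symm)
      refine ⟨{w, (starRingEnd ℂ) w}, 2 * w.re, pair_le_of_mem hne hwroot hwconj, rfl,
        ?_, ?_, ?_, ?_, ?_, ?_⟩
      · intro x hx
        rcases (by simpa using hx : x = w ∨ x = (starRingEnd ℂ) w) with rfl | rfl
        · exact hwabs
        · rw [Complex.norm_conj]; exact hwabs
      · simp only [Multiset.insert_eq_cons, Multiset.map_cons, Multiset.map_singleton,
          Complex.conj_conj]
        exact Multiset.pair_comm _ _
      · simp only [Multiset.insert_eq_cons, Multiset.sum_cons, Multiset.sum_singleton]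
        rw [Complex.add_conj]
      · simp only [Multiset.insert_eq_cons, Multiset.prod_cons, Multiset.prod_singleton]
        rw [Complex.mul_conj, Complex.normSq_eq_norm_sq, hwabs]
        norm_num
      · have := Complex.abs_re_le_norm w
        rw [hwabs] at this
        have := abs_le.mp this
        linarith [this.1]
      · have := Complex.abs_re_le_norm w
        rw [hwabs] at this
        have := abs_le.mp this
        linarith [this.2]
    · push_neg at hcase
      have hone : ∀ w ∈ (P.roots.filter fun w => ‖w‖ = 1), w = 1 := by
        intro w hw
        have him0 : w.im = 0 := hcase w hw
        have habs : ‖w‖ = 1 := (Multiset.mem_filter.mp hw).2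
        have hwr : w = ((w.re : ℝ) : ℂ) := Complex.ext rfl (by simp [him0])
        rw [hwr, Complex.norm_real, Real.norm_eq_abs] at habs
        rcases (abs_eq (by norm_num : (0:ℝ) ≤ 1)).mp habs with h | h
        · rw [hwr, h]; norm_num
        · exfalso
          apply hnegone
          have hmem : w ∈ P.roots := (Multiset.mem_filter.mp hw).1
          rw [hwr, h] at hmem
          simpa using hmem
      have hcount1 : 2 ≤ (P.roots.filter fun w => ‖w‖ = 1).count 1 := by
        have h5 : (P.roots.filter fun w => ‖w‖ = 1).count 1
            = Multiset.card (P.roots.filter fun w => ‖w‖ = 1) :=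
          Multiset.count_eq_card.mpr fun x hx => (hone x hx).symm
        rw [h5]; exact hcirc
      have hrep : Multiset.replicate 2 (1 : ℂ) ≤ (P.roots.filter fun w => ‖w‖ = 1) :=
        Multiset.le_count_iff_replicate_le.mp hcount1
      refine ⟨Multiset.replicate 2 (1 : ℂ), 2, hrep.trans hCle, by simp, ?_, ?_, ?_, ?_,
        by norm_num, le_refl 2⟩
      · intro x hx
        rw [Multiset.eq_of_mem_replicate hx]
        simp
      · simp
      · rw [Multiset.sum_replicate]; norm_num
      · rw [Multiset.prod_replicate]; norm_num
  -- the family of roots coming from z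
  have hzmem : z ∈ P.roots := Polynomial.mem_roots'.mpr ⟨hP0, hzroot⟩
  have hczmem : (starRingEnd ℂ) z ∈ P.roots := by
    rw [← Multiset.count_pos, hcount z, Multiset.count_pos]; exact hzmem
  have hzimem : z⁻¹ ∈ P.roots :=
    Polynomial.mem_roots'.mpr ⟨hP0, hroot_inv z hz0 hzroot⟩
  have hcz0 : (starRingEnd ℂ) z ≠ 0 := fun h => hz0 (by simpa using congrArg (starRingEnd ℂ) h)
  have hczimem : ((starRingEnd ℂ) z)⁻¹ ∈ P.roots :=
    Polynomial.mem_roots'.mpr ⟨hP0, hroot_inv _ hcz0 (Polynomial.isRoot_of_mem_roots hczmem)⟩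
  -- moduli
  have habs_z : 1 < ‖z‖ := by
    have h1 : ‖z‖ ^ 2 = Complex.normSq z := Complex.sq_norm z
    nlinarith [norm_nonneg z]
  have habs_cz : ‖((starRingEnd ℂ) z)‖ = ‖z‖ := Complex.norm_conj z
  have habs_zi : ‖z⁻¹‖ < 1 := by
    rw [norm_inv]
    rw [inv_lt_one_iff₀]
    right; exact habs_z
  have habs_czi : ‖((starRingEnd ℂ) z)⁻¹‖ < 1 := by
    rw [norm_inv, habs_cz, inv_lt_one_iff₀]
    right; exact habs_z
  -- distinctness
  have habs_ne : ∀ a b : ℂ, ‖a‖ ≠ ‖b‖ → a ≠ b := by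
    intro a b h hab; exact h (by rw [hab])
  have hne_z_cz : z ≠ (starRingEnd ℂ) z := fun h => him (Complex.conj_eq_iff_im.mp h.symm)
  have hne_z_zi : z ≠ z⁻¹ := habs_ne _ _ (by intro h; rw [h] at habs_z; linarith)
  have hne_z_czi : z ≠ ((starRingEnd ℂ) z)⁻¹ := habs_ne _ _ (by intro h; rw [h] at habs_z; linarith)
  have hne_cz_zi : (starRingEnd ℂ) z ≠ z⁻¹ :=
    habs_ne _ _ (by rw [habs_cz]; intro h; rw [h] at habs_z; linarith)
  have hne_cz_czi : (starRingEnd ℂ) z ≠ ((starRingEnd ℂ) z)⁻¹ :=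
    habs_ne _ _ (by rw [habs_cz]; intro h; rw [h] at habs_z; linarith)
  have hne_zi_czi : z⁻¹ ≠ ((starRingEnd ℂ) z)⁻¹ := fun h => hne_z_cz (inv_injective h)
  have hWne : ∀ a ∈ W, a ≠ z ∧ a ≠ (starRingEnd ℂ) z ∧ a ≠ z⁻¹ ∧ a ≠ ((starRingEnd ℂ) z)⁻¹ := by
    intro a ha
    have ha1 : ‖a‖ = 1 := hWabs a ha
    refine ⟨habs_ne _ _ ?_, habs_ne _ _ ?_, habs_ne _ _ ?_, habs_ne _ _ ?_⟩ <;>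
      rw [ha1] <;> intro h
    · linarith
    · rw [habs_cz] at h; linarith
    · linarith
    · linarith
  -- the six known roots form a sub-multiset
  set S : Multiset ℂ := z ::ₘ (starRingEnd ℂ) z ::ₘ z⁻¹ ::ₘ ((starRingEnd ℂ) z)⁻¹ ::ₘ W
    with hSdef
  have hScard : Multiset.card S = 6 := by
    rw [hSdef]; simp [hWcard]
  have hSle : S ≤ P.roots := by
    rw [hSdef]
    apply cons_le_of_mem hzmem
    apply cons_le_of_mem ((Multiset.mem_erase_of_ne hne_z_cz.symm).mpr hczmem)
    apply cons_le_of_mem ((Multiset.mem_erase_of_ne hne_cz_zi.symm).mpr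
      ((Multiset.mem_erase_of_ne hne_z_zi.symm).mpr hzimem))
    apply cons_le_of_mem ((Multiset.mem_erase_of_ne hne_zi_czi.symm).mpr
      ((Multiset.mem_erase_of_ne hne_cz_czi.symm).mpr
        ((Multiset.mem_erase_of_ne hne_z_czi.symm).mpr hczimem)))
    rw [Multiset.le_iff_count]
    intro a
    by_cases haW : a ∈ W
    · obtain ⟨h1, h2, h3, h4⟩ := hWne a haW
      rw [Multiset.count_erase_of_ne h4, Multiset.count_erase_of_ne h3,
        Multiset.count_erase_of_ne h2, Multiset.count_erase_of_ne h1]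
      exact Multiset.count_le_of_le a hWle
    · simp [Multiset.count_eq_zero_of_notMem haW]
  have hTS : P.roots - S + S = P.roots := tsub_add_cancel_of_le hSle
  set T := P.roots - S with hTdef
  have hTcard : Multiset.card T = 2 := by
    have h1 := congrArg Multiset.card hTS
    rw [Multiset.card_add] at h1
    omega
  have hTle : T ≤ P.roots := tsub_le_self
  have hSconj : S.map (starRingEnd ℂ) = S := by
    rw [hSdef]
    simp only [Multiset.map_cons, hWconj, map_inv₀, Complex.conj_conj]
    rw [Multiset.cons_swap ((starRingEnd ℂ) z) z,
      Multiset.cons_swap (((starRingEnd ℂ) z)⁻¹) (z⁻¹)]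
  have hTconj : ∀ a : ℂ, T.count ((starRingEnd ℂ) a) = T.count a := by
    intro a
    rw [hTdef, Multiset.count_sub, Multiset.count_sub, hcount a, count_conj_invariant hSconj a]
  -- sum and product of the remaining two roots
  have hczi_eq : ((starRingEnd ℂ) z)⁻¹ = (starRingEnd ℂ) z⁻¹ := (map_inv₀ _ _).symm
  have hSsum : S.sum = ((2 * z.re + 2 * (z⁻¹).re + t1 : ℝ) : ℂ) := by
    rw [hSdef]
    simp only [Multiset.sum_cons, hWsum, hczi_eq]
    rw [show z + ((starRingEnd ℂ) z + (z⁻¹ + ((starRingEnd ℂ) z⁻¹ + ((t1 : ℝ) : ℂ))))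
        = (z + (starRingEnd ℂ) z) + (z⁻¹ + (starRingEnd ℂ) z⁻¹) + ((t1 : ℝ) : ℂ) by ring,
      Complex.add_conj, Complex.add_conj]
    push_cast
    ring
  have hSprod : S.prod = 1 := by
    rw [hSdef]
    simp only [Multiset.prod_cons, hWprod, mul_one]
    field_simp
  set σ : ℝ := s - t1 - 2 * z.re - 2 * (z⁻¹).re with hσdef
  have hTsum : T.sum = ((σ : ℝ) : ℂ) := by
    have h1 := congrArg Multiset.sum hTS
    rw [Multiset.sum_add, hSsum, hsum] at h1
    rw [hσdef]
    push_cast at h1 ⊢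
    linear_combination h1
  have hTprod : T.prod = 1 := by
    have h1 := congrArg Multiset.prod hTS
    rw [Multiset.prod_add, hSprod, hprod, mul_one] at h1
    exact h1
  -- σ > s
  have hinv_re : (z⁻¹).re = z.re / Complex.normSq z := Complex.inv_re z
  have hσs : s < σ := by
    have h1 : z.re / Complex.normSq z < 0 :=
      div_neg_of_neg_of_pos (by linarith) (by linarith)
    rw [hσdef, hinv_re]
    linarith
  have hσ2 : 2 < σ := lt_of_le_of_lt hq hσs
  -- extract the two remaining roots
  obtain ⟨a, b, hTab⟩ := Multiset.card_eq_two.mp hTcard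
  have haT : a ∈ T := by rw [hTab]; simp
  have hbT : b ∈ T := by rw [hTab]; simp
  have hsum_ab : a + b = ((σ : ℝ) : ℂ) := by
    rw [hTab] at hTsum; simpa using hTsum
  have hprod_ab : a * b = 1 := by
    rw [hTab] at hTprod; simpa using hTprod
  -- both remaining roots are real
  have hrealkey : ∀ u v : ℂ, u ∈ T → T = {u, v} → u + v = ((σ : ℝ) : ℂ) → u * v = 1 →
      u.im = 0 := by
    intro u v huT hTuv husum huprod
    by_contra him0
    have hcu : (starRingEnd ℂ) u ∈ T := by
      rw [← Multiset.count_pos, hTconj u, Multiset.count_pos]; exact huT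
    have hcune : (starRingEnd ℂ) u ≠ u := fun h => him0 (Complex.conj_eq_iff_im.mp h)
    have hcuv : (starRingEnd ℂ) u = v := by
      rw [hTuv] at hcu
      rcases (by simpa using hcu : (starRingEnd ℂ) u = u ∨ (starRingEnd ℂ) u = v) with h | h
      · exact absurd h hcune
      · exact h
    rw [← hcuv] at husum huprod
    rw [Complex.mul_conj] at huprod
    have hnsq : Complex.normSq u = 1 := by exact_mod_cast huprod
    rw [Complex.add_conj] at husum
    have hure : 2 * u.re = σ := by exact_mod_cast husum
    have h5 : u.re * u.re ≤ Complex.normSq u := by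
      rw [Complex.normSq_apply]; nlinarith [mul_self_nonneg u.im]
    have h6 : u.re ≤ 1 := by nlinarith
    linarith
  have haim : a.im = 0 := hrealkey a b haT hTab hsum_ab hprod_ab
  have hbim : b.im = 0 := by
    refine hrealkey b a hbT ?_ ?_ ?_
    · rw [hTab]; exact Multiset.pair_comm a b
    · rw [← hsum_ab]; ring
    · rw [← hprod_ab]; ring
  have ha_eq : a = ((a.re : ℝ) : ℂ) := Complex.ext rfl (by simp [haim])
  have hb_eq : b = ((b.re : ℝ) : ℂ) := Complex.ext rfl (by simp [hbim])
  have hsum_re : a.re + b.re = σ := by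
    have := hsum_ab
    rw [ha_eq, hb_eq] at this
    exact_mod_cast this
  have hprod_re : a.re * b.re = 1 := by
    have := hprod_ab
    rw [ha_eq, hb_eq] at this
    exact_mod_cast this
  -- both are roots of p
  have hroot_re : ∀ u : ℂ, u ∈ T → p.eval u.re = 0 := by
    intro u huT
    have h1 : P.eval u = 0 := Polynomial.isRoot_of_mem_roots (Multiset.mem_of_le hTle huT)
    have h2 : u = ((u.re : ℝ) : ℂ) := Complex.ext rfl ?_
    · rw [h2, hevalR] at h1
      exact_mod_cast h1
    · rcases (by rw [hTab] at huT; simpa using huT : u = a ∨ u = b) with rfl | rfl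
      · simp [haim]
      · simp [hbim]
  have hra : p.eval a.re = 0 := hroot_re a haT
  have hrb : p.eval b.re = 0 := hroot_re b hbT
  -- conclude
  have hmain : ∀ xa xb : ℝ, p.eval xb = 0 → xa * xb = 1 → xa + xb = σ → xa ≤ xb →
      ∃ x : ℝ, p.eval x = 0 ∧ 1 < x ∧ s < x + 1 / x := by
    intro xa xb hxb hxprod hxsum hxle
    have hxb1 : 1 < xb := by
      by_contra h
      push_neg at h
      linarith
    refine ⟨xb, hxb, hxb1, ?_⟩
    have hxb0 : xb ≠ 0 := by linarith
    have hxa : xa = 1 / xb := by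
      field_simp
      linarith [hxprod]
    rw [← hxa]
    linarith
  rcases le_total a.re b.re with h | h
  · exact hmain a.re b.re hrb hprod_re hsum_re h
  · exact hmain b.re a.re hra (by linarith [hprod_re] ; ) (by linarith) h
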